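/- arXiv:2303.06243 — 3 statements merged into one kernel-verified Lean document; each statement's English description precedes it below -/
import Mathlib

section
/- Let k be a positive integer, Γ be e^{-1/k} times the backward shift on ℓ²(ℤ), and A = I − Γ. Then for every γ > 0 there exists C_γ > 0 such that |A_{s,t}| ≤ C_γ e^{-γ|s−t|} for all s,t ∈ ℤ, but if γ > 1/k then there is no constant C > 0 with |(A^{-1})_{s,t}| ≤ C e^{-γ|s−t|} for all s,t ∈ ℤ. -/
open scoped ENNReal

/-- Coordinate evaluation as a continuous linear map on `ℓ²(ℤ)`. -/
noncomputable def evalCLM (s : ℤ) : lp (fun _ : ℤ => ℂ) 2 →L[ℂ] ℂ :=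
  LinearMap.mkContinuous
    { toFun := fun f => f s
      map_add' := fun f g => by simp [lp.coeFn_add]
      map_smul' := fun c f => by simp [lp.coeFn_smul] }
    1 (fun f => by
      rw [one_mul]; exact lp.norm_apply_le_norm (by norm_num) f s)

@[simp] lemma evalCLM_apply (s : ℤ) (f : lp (fun _ : ℤ => ℂ) 2) :
    evalCLM s f = f s := rfl

theorem shift_decay_not_inverse_closed (k : ℕ) (hk : 0 < k)
    (Γ : lp (fun _ : ℤ => ℂ) 2 →L[ℂ] lp (fun _ : ℤ => ℂ) 2)
    (hΓ : ∀ s t : ℤ, (Γ (lp.single 2 t 1)) s =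
      if t = s + 1 then (Real.exp (-1 / k) : ℂ) else 0) :
    (∀ γ > (0:ℝ), ∃ C > (0:ℝ), ∀ s t : ℤ,
      ‖((1 - Γ) (lp.single 2 t 1)) s‖ ≤ C * Real.exp (-γ * |(s : ℝ) - (t : ℝ)|)) ∧
    (∀ γ : ℝ, γ > 1 / k →
      ¬ ∃ C > (0:ℝ), ∀ s t : ℤ,
        ‖((Ring.inverse (1 - Γ)) (lp.single 2 t 1)) s‖ ≤ C * Real.exp (-γ * |(s : ℝ) - (t : ℝ)|)) := by
  have hk' : (0:ℝ) < (k:ℝ) := by exact_mod_cast hk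
  set c : ℝ := Real.exp (-1 / k) with hc
  have hc0 : 0 < c := Real.exp_pos _
  have hc1 : c < 1 := by
    rw [hc, Real.exp_lt_one_iff, neg_div]
    have : (0:ℝ) < 1 / k := by positivity
    linarith
  -- coordinates of Γ f
  have hcoord : ∀ (f : lp (fun _ : ℤ => ℂ) 2) (s : ℤ),
      (Γ f) s = (c : ℂ) * f (s + 1) := by
    intro f s
    have h1 : HasSum (fun t : ℤ => lp.single 2 t (f t)) f :=
      lp.hasSum_single (by norm_num) f
    have h2 : HasSum (fun t : ℤ => evalCLM s (Γ (lp.single 2 t (f t))))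
        (evalCLM s (Γ f)) := ((evalCLM s).comp Γ).hasSum h1
    have h3 : (fun t : ℤ => evalCLM s (Γ (lp.single 2 t (f t)))) =
        fun t : ℤ => if t = s + 1 then (c : ℂ) * f (s+1) else 0 := by
      funext t
      have hsingle : lp.single 2 t (f t) = f t • (lp.single 2 t 1 : lp (fun _ : ℤ => ℂ) 2) := by
        rw [← lp.single_smul]
        norm_num
      rw [hsingle, map_smul, map_smul]
      by_cases ht : t = s + 1
      · subst ht
        simp only [evalCLM_apply, smul_eq_mul, if_pos rfl]
        rw [hΓ s (s+1), if_pos rfl, if_pos trivial]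
        ring
      · simp only [evalCLM_apply, smul_eq_mul, if_neg ht]
        rw [hΓ s t, if_neg ht, mul_zero]
    rw [h3] at h2
    have h4 : HasSum (fun t : ℤ => if t = s + 1 then (c : ℂ) * f (s+1) else 0)
        ((c:ℂ) * f (s+1)) := hasSum_ite_eq (s+1) _
    simpa using h2.unique h4
  -- norm bound for Γ
  have hnorm : ‖Γ‖ ≤ c := by
    apply ContinuousLinearMap.opNorm_le_bound _ hc0.le
    intro f
    have hsq : ‖Γ f‖ ^ (2:ℝ) = (c * ‖f‖) ^ (2:ℝ) := by
      have e1 : ‖Γ f‖ ^ ((2:ℝ≥0∞)).toReal = ∑' s : ℤ, ‖(Γ f) s‖ ^ ((2:ℝ≥0∞)).toReal :=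
        lp.norm_rpow_eq_tsum (by norm_num) (Γ f)
      have e2 : ‖f‖ ^ ((2:ℝ≥0∞)).toReal = ∑' s : ℤ, ‖f s‖ ^ ((2:ℝ≥0∞)).toReal :=
        lp.norm_rpow_eq_tsum (by norm_num) f
      have htr : ((2:ℝ≥0∞)).toReal = (2:ℝ) := by norm_num
      rw [htr] at e1 e2
      have e3 : ∀ s : ℤ, ‖(Γ f) s‖ ^ (2:ℝ) = c ^ (2:ℝ) * ‖f (s+1)‖ ^ (2:ℝ) := by
        intro s
        rw [hcoord f s, norm_mul, Complex.norm_real, Real.norm_eq_abs,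
          abs_of_pos hc0, Real.mul_rpow hc0.le (norm_nonneg _)]
      have e4 : ∑' s : ℤ, ‖(Γ f) s‖ ^ (2:ℝ) = c ^ (2:ℝ) * ∑' s : ℤ, ‖f (s+1)‖ ^ (2:ℝ) := by
        rw [tsum_congr e3, tsum_mul_left]
      have e5 : ∑' s : ℤ, ‖f (s+1)‖ ^ (2:ℝ) = ∑' s : ℤ, ‖f s‖ ^ (2:ℝ) :=
        (Equiv.addRight (1:ℤ)).tsum_eq (fun s => ‖f s‖ ^ (2:ℝ))
      rw [e1, e4, e5, ← e2, Real.mul_rpow hc0.le (norm_nonneg _)]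
    have h1 : (0:ℝ) ≤ ‖Γ f‖ := norm_nonneg _
    have h2 : (0:ℝ) ≤ c * ‖f‖ := by positivity
    have hsq' : ‖Γ f‖ ^ (2:ℕ) = (c * ‖f‖) ^ (2:ℕ) := by
      have := hsq
      rw [show (2:ℝ) = ((2:ℕ):ℝ) by norm_num, Real.rpow_natCast, Real.rpow_natCast] at this
      exact this
    have heq : ‖Γ f‖ = c * ‖f‖ := by
      have h3 := congrArg Real.sqrt hsq'
      rwa [Real.sqrt_sq h1, Real.sqrt_sq h2] at h3
    exact heq.le
  have hΓlt : ‖Γ‖ < 1 := lt_of_le_of_lt hnorm hc1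
  -- coordinates of powers of Γ
  have hpow : ∀ (n : ℕ) (s t : ℤ),
      ((Γ ^ n) (lp.single 2 t 1)) s = if t = s + n then ((c:ℂ)) ^ n else 0 := by
    intro n
    induction n with
    | zero =>
      intro s t
      simp only [pow_zero, ContinuousLinearMap.one_apply, Nat.cast_zero, add_zero]
      rw [lp.single_apply]
      by_cases h : t = s
      · subst h; simp
      · rw [Pi.single_apply, if_neg (fun h' : s = t => h h'.symm), if_neg h]
    | succ n ih =>
      intro s t
      rw [pow_succ']
      have : ((Γ * Γ ^ n) (lp.single 2 t 1)) s = (Γ ((Γ ^ n) (lp.single 2 t 1))) s := rfl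
      rw [this, hcoord, ih (s+1) t]
      by_cases h : t = s + (n+1 : ℕ)
      · rw [if_pos h, if_pos (by push_cast at h ⊢; omega)]
        ring
      · rw [if_neg h, if_neg (by push_cast at h ⊢; omega), mul_zero]
  -- the inverse entries
  have hinv : HasSum (fun n : ℕ => Γ ^ n) (Ring.inverse (1 - Γ)) :=
    hasSum_geom_series_inverse Γ hΓlt
  have hinventry : ∀ s t : ℤ,
      HasSum (fun n : ℕ => ((Γ ^ n) (lp.single 2 t 1)) s)
        ((Ring.inverse (1 - Γ)) (lp.single 2 t 1) s) := by
    intro s t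
    exact ((evalCLM s).comp
      (ContinuousLinearMap.apply ℂ (lp (fun _ : ℤ => ℂ) 2) (lp.single 2 t 1))).hasSum hinv
  have hentryN : ∀ N : ℕ,
      (Ring.inverse (1 - Γ)) (lp.single 2 (N:ℤ) 1) 0 = (c:ℂ) ^ N := by
    intro N
    have h := hinventry 0 (N:ℤ)
    have h2 : (fun n : ℕ => ((Γ ^ n) (lp.single 2 (N:ℤ) 1)) 0) =
        fun n : ℕ => if n = N then ((c:ℂ)) ^ N else 0 := by
      funext n
      rw [hpow n 0 (N:ℤ)]
      by_cases hn : n = N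
      · subst hn; rw [if_pos (by ring), if_pos rfl]
      · rw [if_neg (by omega), if_neg hn]
    rw [h2] at h
    exact h.unique (hasSum_ite_eq N _)
  constructor
  · -- part 1
    intro γ hγ
    refine ⟨Real.exp γ + 1, by positivity, fun s t => ?_⟩
    have hval : ((1 - Γ) (lp.single 2 t 1)) s =
        (lp.single (E := fun _ : ℤ => ℂ) 2 t 1) s - (Γ (lp.single 2 t 1)) s := by
      rw [ContinuousLinearMap.sub_apply, ContinuousLinearMap.one_apply, lp.coeFn_sub]
      rfl
    rw [hval, hΓ s t]
    by_cases h1 : t = s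
    · subst h1
      rw [lp.single_apply_self, if_neg (by omega), sub_zero, norm_one]
      have : Real.exp (-γ * |(t:ℝ) - (t:ℝ)|) = 1 := by simp
      rw [this, mul_one]
      nlinarith [Real.exp_pos γ]
    · rw [lp.single_apply_ne 2 t 1 (fun h => h1 h.symm)]
      by_cases h2 : t = s + 1
      · rw [if_pos h2, zero_sub, norm_neg]
        have hnc : ‖((c:ℝ) : ℂ)‖ = c := by
          rw [Complex.norm_real, Real.norm_eq_abs, abs_of_pos hc0]
        rw [show ((Real.exp (-1 / (k:ℝ)) : ℝ) : ℂ) = ((c:ℝ):ℂ) by rw [hc], hnc]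
        have habs : |(s:ℝ) - (t:ℝ)| = 1 := by
          have : (t:ℝ) = (s:ℝ) + 1 := by exact_mod_cast h2
          rw [this]; simp
        rw [habs]
        have h3 : (Real.exp γ + 1) * Real.exp (-γ * 1) ≥ 1 := by
          rw [neg_mul, mul_one, ge_iff_le]
          have : Real.exp γ * Real.exp (-γ) = 1 := by
            rw [← Real.exp_add]; simp
          nlinarith [Real.exp_pos (-γ)]
        linarith [hc1.le]
      · rw [if_neg h2, sub_zero, norm_zero]
        positivity
  · -- part 2
    intro γ hγ ⟨C, hC, hbound⟩
    set δ : ℝ := γ - 1 / k with hδ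
    have hδ0 : 0 < δ := by rw [hδ]; linarith
    set N : ℕ := ⌈Real.log C / δ⌉₊ + 1 with hN
    have hNδ : Real.log C < N * δ := by
      have h1 : Real.log C / δ ≤ (⌈Real.log C / δ⌉₊ : ℝ) := Nat.le_ceil _
      have h2 : ((⌈Real.log C / δ⌉₊ : ℝ)) * δ < N * δ := by
        rw [hN]; push_cast; nlinarith
      calc Real.log C = (Real.log C / δ) * δ := by field_simp
        _ ≤ (⌈Real.log C / δ⌉₊ : ℝ) * δ := by nlinarith
        _ < N * δ := h2
    have hCN : C < Real.exp (N * δ) := by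
      calc C = Real.exp (Real.log C) := (Real.exp_log hC).symm
        _ < Real.exp (N * δ) := Real.exp_lt_exp.mpr hNδ
    have hb := hbound 0 (N : ℤ)
    rw [hentryN N] at hb
    have hnormc : ‖((c:ℝ):ℂ) ^ N‖ = c ^ N := by
      rw [norm_pow, Complex.norm_real, Real.norm_eq_abs, abs_of_pos hc0]
    rw [hnormc] at hb
    have habs : |((0:ℤ):ℝ) - ((N:ℤ):ℝ)| = N := by
      push_cast; rw [zero_sub, abs_neg, abs_of_nonneg (by positivity)]
    rw [habs] at hb
    -- hb : c ^ N ≤ C * Real.exp (-γ * N)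
    have hcN : c ^ N = Real.exp (-(1/k) * N) := by
      rw [hc, ← Real.exp_nat_mul]
      ring_nf
    rw [hcN] at hb
    have : Real.exp (N * δ) ≤ C := by
      have hmul : Real.exp (-(1/k) * N) = Real.exp (N * δ) * Real.exp (-γ * N) := by
        rw [← Real.exp_add]; congr 1; rw [hδ]; ring
      rw [hmul] at hb
      have hp := Real.exp_pos (-γ * N)
      calc Real.exp (N * δ) = Real.exp (N * δ) * Real.exp (-γ * N) / Real.exp (-γ * N) := by
            field_simp
        _ ≤ C * Real.exp (-γ * N) / Real.exp (-γ * N) := by gcongr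
        _ = C := by field_simp
    linarith
end

section
/- Let Λ be a countable index set with metric d satisfying m_ε := sup_{s∈Λ} Σ_{t∈Λ} e^{-ε d(s,t)} < ∞ for all ε > 0. Let R be a matrix with |R_{s,t}| ≤ C e^{-γ'' d(s,t)} for all s,t ∈ Λ, where C ≥ 1 and γ'' > 0. Then for any γ' ∈ (0, γ'') and every n ≥ 1, the n-th matrix power satisfies |(Rⁿ)_{s,t}| ≤ Cⁿ (m_{γ''−γ'})^{n−1} e^{-γ' d(s,t)} for all s,t ∈ Λ. -/
open scoped Classical in
noncomputable def matPow {Λ : Type*} (R : Λ → Λ → ℂ) : ℕ → Λ → Λ → ℂ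
  | 0 => fun s t => if s = t then 1 else 0
  | (n + 1) => fun s t => ∑' u : Λ, matPow R n s u * R u t

theorem matrix_power_decay {Λ : Type*} [Countable Λ] [MetricSpace Λ]
    (hsum : ∀ ε > (0:ℝ), ∀ s : Λ, Summable (fun t : Λ => Real.exp (-ε * dist s t)))
    (hbdd : ∀ ε > (0:ℝ), BddAbove (Set.range fun s : Λ => ∑' t : Λ, Real.exp (-ε * dist s t)))
    (R : Λ → Λ → ℂ) (C γ'' : ℝ) (hC : 1 ≤ C) (hγ'' : 0 < γ'')
    (hR : ∀ s t : Λ, ‖R s t‖ ≤ C * Real.exp (-γ'' * dist s t)) :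
    ∀ γ' : ℝ, 0 < γ' → γ' < γ'' → ∀ n : ℕ, 1 ≤ n → ∀ s t : Λ,
      ‖matPow R n s t‖ ≤
        C ^ n * (⨆ s' : Λ, ∑' t' : Λ, Real.exp (-(γ'' - γ') * dist s' t')) ^ (n - 1) *
          Real.exp (-γ' * dist s t) := by
  intro γ' hγ' hlt
  set ε : ℝ := γ'' - γ' with hεdef
  have hε : 0 < ε := by simp [hεdef]; linarith
  set M : ℝ := ⨆ s' : Λ, ∑' t' : Λ, Real.exp (-ε * dist s' t') with hMdef
  have hMle : ∀ u : Λ, (∑' t' : Λ, Real.exp (-ε * dist u t')) ≤ M := fun u =>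
    le_ciSup (hbdd ε hε) u
  have hM1 : ∀ u : Λ, (1:ℝ) ≤ M := by
    intro u
    refine le_trans ?_ (hMle u)
    have := Summable.le_tsum (hsum ε hε u) u (fun t' _ => (Real.exp_pos _).le)
    simpa using this
  have hC0 : (0:ℝ) < C := lt_of_lt_of_le one_pos hC
  intro n hn
  induction n, hn using Nat.le_induction with
  | base =>
    intro s t
    have h1 : matPow R 1 s t = R s t := by
      show (∑' u : Λ, matPow R 0 s u * R u t) = R s t
      rw [tsum_eq_single s]
      · simp [matPow]
      · intro u hu
        simp [matPow, Ne.symm hu]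
    rw [h1]
    simp only [pow_one, Nat.sub_self, pow_zero, mul_one]
    refine (hR s t).trans ?_
    have : Real.exp (-γ'' * dist s t) ≤ Real.exp (-γ' * dist s t) := by
      apply Real.exp_le_exp.2
      nlinarith [dist_nonneg (x := s) (y := t)]
    nlinarith [Real.exp_pos (-γ'' * dist s t)]
  | succ n hn IH =>
    intro s t
    obtain ⟨k, rfl⟩ : ∃ k, n = k + 1 := ⟨n - 1, (Nat.succ_pred_eq_of_pos hn).symm⟩
    set A : ℝ := C ^ (k+1) * M ^ k * C * Real.exp (-γ' * dist s t) with hAdef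
    have hA0 : 0 ≤ A := by
      have := hM1 t
      positivity
    have hpt : ∀ u : Λ, ‖matPow R (k+1) s u * R u t‖ ≤ A * Real.exp (-ε * dist t u) := by
      intro u
      rw [norm_mul]
      have h1 := IH s u
      have h2 := hR u t
      have hexp : Real.exp (-γ' * dist s u) * Real.exp (-γ'' * dist u t)
          ≤ Real.exp (-γ' * dist s t) * Real.exp (-ε * dist t u) := by
        rw [← Real.exp_add, ← Real.exp_add]
        apply Real.exp_le_exp.2
        have htri := dist_triangle s u t
        have hcomm : dist u t = dist t u := dist_comm u t
        simp only [hεdef]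
        nlinarith
      calc ‖matPow R (k+1) s u‖ * ‖R u t‖
          ≤ (C ^ (k+1) * M ^ k * Real.exp (-γ' * dist s u)) * (C * Real.exp (-γ'' * dist u t)) := by
            apply mul_le_mul h1 h2 (norm_nonneg _)
            have := hM1 t
            positivity
        _ = (C ^ (k+1) * M ^ k * C) * (Real.exp (-γ' * dist s u) * Real.exp (-γ'' * dist u t)) := by
            ring
        _ ≤ (C ^ (k+1) * M ^ k * C) * (Real.exp (-γ' * dist s t) * Real.exp (-ε * dist t u)) := by
            apply mul_le_mul_of_nonneg_left hexp
            have := hM1 t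
            positivity
        _ = A * Real.exp (-ε * dist t u) := by rw [hAdef]; ring
    have hgsum : Summable fun u : Λ => A * Real.exp (-ε * dist t u) :=
      (hsum ε hε t).mul_left A
    have hnsum : Summable fun u : Λ => ‖matPow R (k+1) s u * R u t‖ :=
      Summable.of_nonneg_of_le (fun u => norm_nonneg _) hpt hgsum
    calc ‖matPow R (k+1+1) s t‖
        ≤ ∑' u : Λ, ‖matPow R (k+1) s u * R u t‖ := norm_tsum_le_tsum_norm hnsum
      _ ≤ ∑' u : Λ, A * Real.exp (-ε * dist t u) := Summable.tsum_le_tsum hpt hnsum hgsum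
      _ = A * ∑' u : Λ, Real.exp (-ε * dist t u) := tsum_mul_left
      _ ≤ A * M := by
          apply mul_le_mul_of_nonneg_left (hMle t) hA0
      _ = C ^ (k+1+1) * M ^ (k+1+1-1) * Real.exp (-γ' * dist s t) := by
          rw [hAdef, Nat.add_sub_cancel]; ring
end

section
/- Let c₀, h > 0 and suppose |A_{s,t}| ≤ K₁ e^{p(c₀ p^h − d(s,t))} for all s,t ∈ Λ and all real p ≥ 1, where K₁ ≥ 1. Then |A_{s,t}| ≤ K₁ e^{c₀} e^{-d(s,t)} whenever d(s,t) ≤ c₀(1+h), and |A_{s,t}| ≤ K₁ e^{-c̃₀ d(s,t)^{1+1/h}} whenever d(s,t) > c₀(1+h), where c̃₀ = h c₀^{-1/h} (1+h)^{-1-1/h}. -/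
theorem superexp_decay_from_family {Λ : Type*} [MetricSpace Λ]
    (A : Λ → Λ → ℂ) (c₀ h K₁ : ℝ) (hc₀ : 0 < c₀) (hh : 0 < h) (hK₁ : 1 ≤ K₁)
    (hA : ∀ p : ℝ, 1 ≤ p → ∀ s t : Λ,
      ‖A s t‖ ≤ K₁ * Real.exp (p * (c₀ * p ^ h - dist s t))) :
    ∀ s t : Λ,
      (dist s t ≤ c₀ * (1 + h) →
        ‖A s t‖ ≤ K₁ * Real.exp c₀ * Real.exp (-dist s t)) ∧
      (dist s t > c₀ * (1 + h) →
        ‖A s t‖ ≤ K₁ * Real.exp (-(h * c₀ ^ (-1 / h) * (1 + h) ^ (-1 - 1 / h)) *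
          dist s t ^ (1 + 1 / h))) := by
  intro s t
  constructor
  · intro _
    have h1 := hA 1 le_rfl s t
    simpa [Real.one_rpow, Real.exp_add, sub_eq_add_neg, mul_assoc] using h1
  · intro hd
    set d := dist s t with hdd
    have h1h : (0:ℝ) < 1 + h := by linarith
    have hcd : (0:ℝ) < c₀ * (1 + h) := by positivity
    have hdpos : 0 < d := lt_trans hcd hd
    set x := d / (c₀ * (1 + h)) with hx
    have hx1 : 1 ≤ x := by
      rw [hx, le_div_iff₀ hcd]; linarith
    have hxpos : 0 < x := lt_of_lt_of_le one_pos hx1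
    set p := x ^ (1 / h) with hp
    have hp1 : 1 ≤ p := by
      calc (1:ℝ) = 1 ^ (1/h) := (Real.one_rpow _).symm
        _ ≤ x ^ (1/h) := Real.rpow_le_rpow zero_le_one hx1 (by positivity)
    have hph : p ^ h = x := by
      rw [hp, ← Real.rpow_mul hxpos.le, one_div, inv_mul_cancel₀ hh.ne', Real.rpow_one]
    have key := hA p hp1 s t
    have hexp : p * (c₀ * p ^ h - d) =
        -(h * c₀ ^ (-1 / h) * (1 + h) ^ (-1 - 1 / h)) * d ^ (1 + 1 / h) := by
      rw [hph]
      have hcx : c₀ * x = d / (1 + h) := by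
        rw [hx]; field_simp
      have hpval : p = d ^ (1/h) * (c₀ ^ (-1/h) * (1 + h) ^ (-1/h)) := by
        rw [hp, hx, Real.div_rpow hdpos.le hcd.le, Real.mul_rpow hc₀.le h1h.le,
          show (-1/h : ℝ) = -(1/h) by ring, Real.rpow_neg hc₀.le, Real.rpow_neg h1h.le]
        field_simp
      have hd1 : d ^ (1 + 1/h) = d * d ^ (1/h) := by
        rw [Real.rpow_add hdpos, Real.rpow_one]
      have hh1 : (1 + h) ^ (-1 - 1/h) = (1 + h)⁻¹ * (1 + h) ^ (-1/h) := by
        rw [show (-1 - 1/h : ℝ) = (-1) + (-1/h) by ring, Real.rpow_add h1h,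
          Real.rpow_neg_one]
      rw [hcx, hpval, hd1, hh1]
      field_simp
      ring
    rw [hexp] at key
    exact key
end
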